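/- Let V be a real Hilbert space, T > 0, σ > 0, and let φ : V → ℝ be convex. Let g : [0,T] → V, and for i = 1, 2 let wᵢ : [0,T] → V be Bochner integrable and set zᵢ(t) = ∫₀ᵗ wᵢ(s) ds. Assume that for almost every t ∈ [0,T] and every v ∈ V: φ(v) ≥ φ(wᵢ(t)) + ⟨g(t) − zᵢ(t) − σ·wᵢ(t), v − wᵢ(t)⟩. Then z₁(t) = z₂(t) for every t ∈ [0,T] and w₁ = w₂ almost everywhere on [0,T]. -/

import Mathlib

open MeasureTheory
open scoped RealInnerProductSpace

lemma sq_norm_integral_eq {V : Type*} [NormedAddCommGroup V] [InnerProductSpace ℝ V]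
    [CompleteSpace V] {w : ℝ → V} {t : ℝ}
    (hw : IntegrableOn w (Set.Ioc 0 t) volume) :
    ‖∫ s in Set.Ioc (0:ℝ) t, w s‖ ^ 2
      = 2 * ∫ s in Set.Ioc (0:ℝ) t, ⟪w s, ∫ r in Set.Ioc (0:ℝ) s, w r⟫ := by
  set μ := volume.restrict (Set.Ioc (0:ℝ) t) with hμ
  have hwμ : Integrable w μ := hw
  set F : ℝ × ℝ → ℝ := fun p => ⟪w p.1, w p.2⟫ with hFdef
  have hFmeas : AEStronglyMeasurable F (μ.prod μ) :=
    (hwμ.aestronglyMeasurable.comp_fst.inner hwμ.aestronglyMeasurable.comp_snd)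
  have hFint : Integrable F (μ.prod μ) := by
    refine (hwμ.norm.mul_prod hwμ.norm).mono' hFmeas ?_
    filter_upwards with p
    simpa [Real.norm_eq_abs] using abs_real_inner_le_norm (w p.1) (w p.2)
  set S : Set (ℝ × ℝ) := {p : ℝ × ℝ | p.2 ≤ p.1} with hSdef
  have hS : MeasurableSet S := measurableSet_le measurable_snd measurable_fst
  have hlt : MeasurableSet {p : ℝ × ℝ | p.2 < p.1} :=
    measurableSet_lt measurable_snd measurable_fst
  -- the diagonal is null
  have hdiag : (μ.prod μ) {p : ℝ × ℝ | p.1 = p.2} = 0 := by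
    have hd : MeasurableSet {p : ℝ × ℝ | p.1 = p.2} :=
      measurableSet_eq_fun measurable_fst measurable_snd
    rw [Measure.prod_apply hd]
    have h2 : ∀ x : ℝ, μ (Prod.mk x ⁻¹' {p : ℝ × ℝ | p.1 = p.2}) = 0 := by
      intro x
      have h1 : Prod.mk x ⁻¹' {p : ℝ × ℝ | p.1 = p.2} = {x} := by
        ext y; simp [eq_comm]
      rw [h1]
      refine le_antisymm ?_ zero_le
      calc μ {x} ≤ volume {x} := Measure.restrict_le_self _
        _ = 0 := Real.volume_singleton
    simp [h2]
  -- main computation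
  have h0 : ‖∫ s, w s ∂μ‖ ^ 2 = ∫ p, F p ∂(μ.prod μ) := by
    rw [← real_inner_self_eq_norm_sq, ← integral_inner hwμ]
    rw [integral_prod _ hFint]
    refine integral_congr_ae (Filter.Eventually.of_forall fun r => ?_)
    show ⟪∫ s, w s ∂μ, w r⟫ = ∫ y, F (r, y) ∂μ
    rw [real_inner_comm]
    exact (integral_inner hwμ (w r)).symm
  -- part 1 : the lower triangle
  have part1 : ∫ p in S, F p ∂(μ.prod μ) = ∫ r, ⟪w r, ∫ s in Set.Ioc (0:ℝ) r, w s⟫ ∂μ := by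
    rw [← integral_indicator hS, integral_prod _ (hFint.indicator hS)]
    refine integral_congr_ae ?_
    filter_upwards [ae_restrict_mem measurableSet_Ioc] with r hr
    have h1 : (fun s => S.indicator F (r, s)) =
        (Set.Iic r).indicator (fun s => ⟪w r, w s⟫) := by
      ext s
      simp [Set.indicator_apply, hSdef, Set.mem_Iic, hFdef]
    rw [h1, integral_indicator measurableSet_Iic, hμ,
      Measure.restrict_restrict measurableSet_Iic]
    have hset : Set.Iic r ∩ Set.Ioc 0 t = Set.Ioc 0 r := by
      ext s
      simp only [Set.mem_inter_iff, Set.mem_Iic, Set.mem_Ioc]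
      constructor
      · rintro ⟨hs1, hs2, _⟩; exact ⟨hs2, hs1⟩
      · rintro ⟨hs1, hs2⟩; exact ⟨hs2, hs1, hs2.trans hr.2⟩
    rw [hset, integral_inner (hw.mono_set (Set.Ioc_subset_Ioc_right hr.2))]
  -- part 2 : the upper triangle equals the lower one
  have part2 : ∫ p in Sᶜ, F p ∂(μ.prod μ) = ∫ p in S, F p ∂(μ.prod μ) := by
    have hswap : (fun z : ℝ × ℝ => (Sᶜ.indicator F) z.swap)
        = {p : ℝ × ℝ | p.2 < p.1}.indicator F := by
      funext z
      simp only [Set.indicator_apply, Set.mem_compl_iff, hSdef, Set.mem_setOf_eq, Prod.fst_swap,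
        Prod.snd_swap, not_le, hFdef]
      by_cases h : z.2 < z.1 <;> simp [h, real_inner_comm]
    have hsets : {p : ℝ × ℝ | p.2 < p.1} =ᵐ[μ.prod μ] S := by
      rw [MeasureTheory.ae_eq_set]
      constructor
      · have he : {p : ℝ × ℝ | p.2 < p.1} \ S = ∅ := by
          ext p; simp only [Set.mem_diff, Set.mem_setOf_eq, hSdef, Set.mem_empty_iff_false,
            iff_false, not_and, not_not]
          exact fun h => h.le
        rw [he]; exact measure_empty
      · refine measure_mono_null ?_ hdiag
        rintro ⟨a, b⟩ ⟨h1, h2⟩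
        simp only [Set.mem_setOf_eq] at h1 h2 ⊢
        exact le_antisymm (not_lt.1 h2) h1
    rw [← integral_indicator hS.compl, ← integral_prod_swap (Sᶜ.indicator F)]
    rw [hswap, integral_indicator hlt]
    exact setIntegral_congr_set hsets
  have hsplit : ∫ p, F p ∂(μ.prod μ)
      = (∫ p in S, F p ∂(μ.prod μ)) + ∫ p in Sᶜ, F p ∂(μ.prod μ) :=
    (integral_add_compl hS hFint).symm
  rw [show (∫ s in Set.Ioc (0:ℝ) t, w s) = ∫ s, w s ∂μ from rfl, h0, hsplit, part2, part1]
  ring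
theorem uniqueness_of_viscous_evolution {V : Type*} [NormedAddCommGroup V]
    [InnerProductSpace ℝ V] [CompleteSpace V]
    (T σ : ℝ) (hT : 0 < T) (hσ : 0 < σ)
    (φ : V → ℝ) (hφ : ConvexOn ℝ Set.univ φ)
    (g w₁ w₂ : ℝ → V)
    (hw₁ : IntegrableOn w₁ (Set.Icc 0 T) volume)
    (hw₂ : IntegrableOn w₂ (Set.Icc 0 T) volume)
    (z₁ z₂ : ℝ → V)
    (hz₁ : ∀ t : ℝ, z₁ t = ∫ s in (0:ℝ)..t, w₁ s)
    (hz₂ : ∀ t : ℝ, z₂ t = ∫ s in (0:ℝ)..t, w₂ s)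
    (hvi₁ : ∀ᵐ t ∂(volume.restrict (Set.Icc 0 T)), ∀ v : V,
      φ v ≥ φ (w₁ t) + ⟪g t - z₁ t - σ • w₁ t, v - w₁ t⟫)
    (hvi₂ : ∀ᵐ t ∂(volume.restrict (Set.Icc 0 T)), ∀ v : V,
      φ v ≥ φ (w₂ t) + ⟪g t - z₂ t - σ • w₂ t, v - w₂ t⟫) :
    (∀ t ∈ Set.Icc (0:ℝ) T, z₁ t = z₂ t) ∧
      (∀ᵐ t ∂(volume.restrict (Set.Icc 0 T)), w₁ t = w₂ t) := by
  set d : ℝ → V := fun s => w₁ s - w₂ s with hd_def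
  have hd : IntegrableOn d (Set.Icc 0 T) volume := hw₁.sub hw₂
  -- z₁ - z₂ is the primitive of d
  have hu : ∀ t ∈ Set.Icc (0:ℝ) T, z₁ t - z₂ t = ∫ s in Set.Ioc (0:ℝ) t, d s := by
    intro t ht
    have hsub : Set.Ioc (0:ℝ) t ⊆ Set.Icc 0 T :=
      (Set.Ioc_subset_Icc_self).trans (Set.Icc_subset_Icc_right ht.2)
    rw [hz₁, hz₂, intervalIntegral.integral_of_le ht.1, intervalIntegral.integral_of_le ht.1,
      ← integral_sub (hw₁.mono_set hsub) (hw₂.mono_set hsub)]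
  -- the a.e. differential inequality
  have hae : ∀ᵐ t ∂(volume.restrict (Set.Icc 0 T)),
      ⟪z₁ t - z₂ t, d t⟫ + σ * ‖d t‖ ^ 2 ≤ 0 := by
    filter_upwards [hvi₁, hvi₂] with t h1 h2
    have a := h1 (w₂ t)
    have b := h2 (w₁ t)
    have key : ⟪(z₁ t - z₂ t) + σ • (w₁ t - w₂ t), w₁ t - w₂ t⟫ ≤ 0 := by
      have e1 : (g t - z₂ t - σ • w₂ t) - (g t - z₁ t - σ • w₁ t)
          = (z₁ t - z₂ t) + σ • (w₁ t - w₂ t) := by module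
      have e2 : w₂ t - w₁ t = -(w₁ t - w₂ t) := by abel
      rw [← e1, inner_sub_left]
      rw [e2, inner_neg_right] at a
      linarith
    rw [inner_add_left, real_inner_smul_left, real_inner_self_eq_norm_sq] at key
    exact key
  -- first part
  have hfirst : ∀ t ∈ Set.Icc (0:ℝ) T, z₁ t = z₂ t := by
    intro t ht
    have hsub : Set.Ioc (0:ℝ) t ⊆ Set.Icc 0 T :=
      (Set.Ioc_subset_Icc_self).trans (Set.Icc_subset_Icc_right ht.2)
    have hwd : IntegrableOn d (Set.Ioc 0 t) volume := hd.mono_set hsub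
    have hkey := sq_norm_integral_eq hwd
    have hint_nonpos : ∫ s in Set.Ioc (0:ℝ) t, ⟪d s, ∫ r in Set.Ioc (0:ℝ) s, d r⟫ ≤ 0 := by
      refine integral_nonpos_of_ae ?_
      filter_upwards [ae_restrict_of_ae_restrict_of_subset hsub hae,
        ae_restrict_mem measurableSet_Ioc] with s hs hmem
      have hsIcc : s ∈ Set.Icc (0:ℝ) T := hsub hmem
      simp only [Pi.zero_apply]
      rw [real_inner_comm, ← hu s hsIcc]
      nlinarith [mul_nonneg hσ.le (sq_nonneg ‖d s‖)]
    have hsq : ‖z₁ t - z₂ t‖ ^ 2 ≤ 0 := by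
      rw [hu t ht, hkey]; linarith
    have : z₁ t - z₂ t = 0 := by
      have h1 : ‖z₁ t - z₂ t‖ ^ 2 = 0 := le_antisymm hsq (sq_nonneg _)
      have h2 : ‖z₁ t - z₂ t‖ = 0 := by
        nlinarith [norm_nonneg (z₁ t - z₂ t)]
      exact norm_eq_zero.1 h2
    exact sub_eq_zero.1 this
  refine ⟨hfirst, ?_⟩
  filter_upwards [hae, ae_restrict_mem measurableSet_Icc] with t h1 hmem
  have hz : z₁ t - z₂ t = 0 := sub_eq_zero.2 (hfirst t hmem)
  rw [hz, inner_zero_left] at h1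
  have hdz : d t = 0 := by
    have : ‖d t‖ ^ 2 ≤ 0 := by nlinarith
    have h2 : ‖d t‖ = 0 := by nlinarith [norm_nonneg (d t), sq_nonneg ‖d t‖]
    exact norm_eq_zero.1 h2
  exact sub_eq_zero.1 hdz
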